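/- Let Σ ∈ ℝ^{m×n} be rectangular diagonal with diagonal entries σ₁ ≥ … ≥ σ_k > 0 and σ_j = 0 for all j > k (so rank(Σ) = k), let Ṽ ∈ ℝ^{n×n} be orthogonal, let μ be a probability measure on ℝ^n with ∫‖x‖² dμ(x) < ∞, set r = min(m,n), and let p₁,…,p_r > 0 with ∑_b p_b = 1. If (U,V) ∈ ℝ^{m×r} × ℝ^{n×r} is a global minimizer of G(U,V) = ∫ ∑_{b=1}^r p_b ‖(U_{:b}V_{:b}ᵀ − Σ) Ṽᵀ x‖² dμ(x), then for every b ∈ {1,…,r} and every coordinate index j with k < j ≤ m, the j-th coordinate of U_{:b}V_{:b}ᵀ Ṽᵀ x is zero for μ-almost every x. Consequently, replacing rows k+1,…,m of U by zero does not change the value of G and again yields a global minimizer. -/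
import Mathlib


open Matrix MeasureTheory

noncomputable section

/-- Squared Euclidean norm of a vector in `ℝ^m`. -/
def sqNorm {m : ℕ} (v : Fin m → ℝ) : ℝ := ∑ i, v i ^ 2

/-- `lrProd b U V = U_{:b} V_{:b}ᵀ`, the product of the submatrices consisting of the
first `b` columns of `U` and of `V`. -/
def lrProd {m n r : ℕ} (b : ℕ) (U : Matrix (Fin m) (Fin r) ℝ)
    (V : Matrix (Fin n) (Fin r) ℝ) : Matrix (Fin m) (Fin n) ℝ :=
  Matrix.of fun i j => ∑ t : Fin r, if (t : ℕ) < b then U i t * V j t else 0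

/-- `G(U,V) = ∫ ∑_{b=1}^r p_b ‖(U_{:b}V_{:b}ᵀ − Σ) Ṽᵀ x‖² dμ(x)`.
(The index `b : Fin r` stands for the 1-indexed truncation level `b+1 ∈ {1,…,r}`.) -/
def transObj {m n r : ℕ} (S : Matrix (Fin m) (Fin n) ℝ)
    (Vt : Matrix (Fin n) (Fin n) ℝ) (μ : Measure (Fin n → ℝ)) (p : Fin r → ℝ)
    (U : Matrix (Fin m) (Fin r) ℝ) (V : Matrix (Fin n) (Fin r) ℝ) : ℝ :=
  ∫ x, ∑ b : Fin r,
    p b * sqNorm ((lrProd ((b : ℕ) + 1) U V - S).mulVec (Vtᵀ.mulVec x)) ∂μ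

lemma sqNorm_nonneg' {m : ℕ} (v : Fin m → ℝ) : 0 ≤ sqNorm v :=
  Finset.sum_nonneg fun _ _ => sq_nonneg _

lemma sqNorm_mulVec_le {m n : ℕ} (A : Matrix (Fin m) (Fin n) ℝ) (x : Fin n → ℝ) :
    sqNorm (A.mulVec x) ≤ (∑ i, ∑ j, A i j ^ 2) * ∑ j, x j ^ 2 := by
  unfold sqNorm
  rw [Finset.sum_mul]
  refine Finset.sum_le_sum fun i _ => ?_
  have h : A.mulVec x i = ∑ j, A i j * x j := by
    simp [Matrix.mulVec, dotProduct]
  rw [h]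
  exact Finset.sum_mul_sq_le_sq_mul_sq _ _ _

lemma integrand_integrable {n r m : ℕ} (μ : Measure (Fin n → ℝ))
    (hmoment : Integrable (fun x => ∑ i, x i ^ 2) μ)
    (N : Fin r → Matrix (Fin m) (Fin n) ℝ) (p : Fin r → ℝ) (hp : ∀ b, 0 ≤ p b) :
    Integrable (fun x => ∑ b, p b * sqNorm ((N b).mulVec x)) μ := by
  set C := ∑ b, p b * (∑ i, ∑ j, (N b) i j ^ 2) with hC
  have hmeas : AEStronglyMeasurable (fun x => ∑ b : Fin r, p b * sqNorm ((N b).mulVec x)) μ := by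
    apply Continuous.aestronglyMeasurable
    unfold sqNorm
    simp only [Matrix.mulVec, dotProduct]
    fun_prop
  refine (hmoment.const_mul C).mono' hmeas (Filter.Eventually.of_forall fun x => ?_)
  have h1 : 0 ≤ ∑ b : Fin r, p b * sqNorm ((N b).mulVec x) :=
    Finset.sum_nonneg fun b _ => mul_nonneg (hp b) (sqNorm_nonneg' _)
  rw [Real.norm_of_nonneg h1]
  calc ∑ b : Fin r, p b * sqNorm ((N b).mulVec x)
      ≤ ∑ b : Fin r, p b * ((∑ i, ∑ j, (N b) i j ^ 2) * ∑ j, x j ^ 2) :=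
        Finset.sum_le_sum fun b _ =>
          mul_le_mul_of_nonneg_left (sqNorm_mulVec_le _ _) (hp b)
    _ = C * ∑ j, x j ^ 2 := by rw [hC, Finset.sum_mul]; simp [mul_assoc]

lemma lrProd_zero_rows {m n r : ℕ} (k c : ℕ) (U : Matrix (Fin m) (Fin r) ℝ)
    (V : Matrix (Fin n) (Fin r) ℝ) (i : Fin m) (j : Fin n) :
    lrProd c (Matrix.of fun i t => if k ≤ (i : ℕ) then 0 else U i t) V i j =
      if k ≤ (i : ℕ) then 0 else lrProd c U V i j := by
  unfold lrProd
  simp only [Matrix.of_apply]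
  split_ifs with h
  · exact Finset.sum_eq_zero fun t _ => by simp [h]
  · exact Finset.sum_congr rfl fun t _ => by simp [h]


/-- Let `Σ ∈ ℝ^{m×n}` be rectangular diagonal of rank `k` (diagonal
entries `σ₁ ≥ … ≥ σ_k > 0` and `σ_j = 0` for `j > k`), `Ṽ ∈ ℝ^{n×n}` orthogonal, `μ` a
probability measure with finite second moment, `r = min m n`, and `p_b > 0` with
`∑ p_b = 1`. If `(U,V)` globally minimizes
`G(U,V) = ∫ ∑_b p_b ‖(U_{:b}V_{:b}ᵀ − Σ)Ṽᵀ x‖² dμ`, then for every `b ∈ {1,…,r}` and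
every coordinate `j` with `k < j ≤ m` (0-indexed: `k ≤ j`), the `j`-th coordinate of
`U_{:b}V_{:b}ᵀ Ṽᵀ x` vanishes for `μ`-a.e. `x`; consequently, zeroing out rows
`k+1,…,m` of `U` leaves the value of `G` unchanged and again yields a global
minimizer. -/
theorem stmt12 {m n k : ℕ} (hk : k ≤ min m n)
    (S : Matrix (Fin m) (Fin n) ℝ)
    (hSdiag : ∀ (i : Fin m) (j : Fin n), (i : ℕ) ≠ (j : ℕ) → S i j = 0)
    (hSpos : ∀ (i : Fin m) (j : Fin n), (i : ℕ) = (j : ℕ) → (i : ℕ) < k → 0 < S i j)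
    (hSzero : ∀ (i : Fin m) (j : Fin n), (i : ℕ) = (j : ℕ) → k ≤ (i : ℕ) → S i j = 0)
    (hSmono : ∀ (i i' : Fin m) (j j' : Fin n), (i : ℕ) = (j : ℕ) → (i' : ℕ) = (j' : ℕ) →
      (i : ℕ) ≤ (i' : ℕ) → S i' j' ≤ S i j)
    (Vt : Matrix (Fin n) (Fin n) ℝ)
    (hVorth : Vtᵀ * Vt = 1) (hVorth' : Vt * Vtᵀ = 1)
    (μ : Measure (Fin n → ℝ)) [IsProbabilityMeasure μ]
    (hmoment : Integrable (fun x => ∑ i, x i ^ 2) μ)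
    (p : Fin (min m n) → ℝ) (hp : ∀ b, 0 < p b) (hpsum : ∑ b, p b = 1)
    (U : Matrix (Fin m) (Fin (min m n)) ℝ) (V : Matrix (Fin n) (Fin (min m n)) ℝ)
    (hmin : ∀ (U' : Matrix (Fin m) (Fin (min m n)) ℝ)
      (V' : Matrix (Fin n) (Fin (min m n)) ℝ),
      transObj S Vt μ p U V ≤ transObj S Vt μ p U' V') :
    (∀ b : Fin (min m n), ∀ j : Fin m, k ≤ (j : ℕ) →
      ∀ᵐ x ∂μ, (lrProd ((b : ℕ) + 1) U V).mulVec (Vtᵀ.mulVec x) j = 0) ∧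
    (transObj S Vt μ p
        (Matrix.of fun i t => if k ≤ (i : ℕ) then 0 else U i t) V =
      transObj S Vt μ p U V ∧
      ∀ (U' : Matrix (Fin m) (Fin (min m n)) ℝ)
        (V' : Matrix (Fin n) (Fin (min m n)) ℝ),
        transObj S Vt μ p (Matrix.of fun i t => if k ≤ (i : ℕ) then 0 else U i t) V ≤
          transObj S Vt μ p U' V') := by
  classical
  set U0 : Matrix (Fin m) (Fin (min m n)) ℝ :=
    Matrix.of fun i t => if k ≤ (i : ℕ) then 0 else U i t with hU0
  set f : (Fin n → ℝ) → ℝ := fun x => ∑ b : Fin (min m n),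
    p b * sqNorm ((lrProd ((b : ℕ) + 1) U V - S).mulVec (Vtᵀ.mulVec x)) with hfdef
  set g : (Fin n → ℝ) → ℝ := fun x => ∑ b : Fin (min m n),
    p b * sqNorm ((lrProd ((b : ℕ) + 1) U0 V - S).mulVec (Vtᵀ.mulVec x)) with hgdef
  set h : (Fin n → ℝ) → ℝ := fun x => ∑ b : Fin (min m n),
    p b * ∑ j : Fin m, (if k ≤ (j : ℕ) then
      ((lrProd ((b : ℕ) + 1) U V).mulVec (Vtᵀ.mulVec x) j) ^ 2 else 0) with hhdef
  -- mulVec row vanishing facts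
  have hSrow : ∀ (v : Fin n → ℝ) (j : Fin m), k ≤ (j : ℕ) → S.mulVec v j = 0 := by
    intro v j hj
    simp only [Matrix.mulVec, dotProduct]
    refine Finset.sum_eq_zero fun l _ => ?_
    rcases eq_or_ne (j : ℕ) (l : ℕ) with he | he
    · rw [hSzero j l he hj, zero_mul]
    · rw [hSdiag j l he, zero_mul]
  have hU0row : ∀ (c : ℕ) (v : Fin n → ℝ) (j : Fin m), k ≤ (j : ℕ) →
      (lrProd c U0 V).mulVec v j = 0 := by
    intro c v j hj
    simp only [Matrix.mulVec, dotProduct]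
    refine Finset.sum_eq_zero fun l _ => ?_
    rw [hU0, lrProd_zero_rows, if_pos hj, zero_mul]
  have hU0row' : ∀ (c : ℕ) (v : Fin n → ℝ) (j : Fin m), ¬ k ≤ (j : ℕ) →
      (lrProd c U0 V).mulVec v j = (lrProd c U V).mulVec v j := by
    intro c v j hj
    simp only [Matrix.mulVec, dotProduct]
    refine Finset.sum_congr rfl fun l _ => ?_
    rw [hU0, lrProd_zero_rows, if_neg hj]
  -- pointwise decomposition
  have hfg : ∀ x, f x = g x + h x := by
    intro x
    rw [hfdef, hgdef, hhdef]
    simp only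
    rw [← Finset.sum_add_distrib]
    refine Finset.sum_congr rfl fun b _ => ?_
    rw [← mul_add]
    congr 1
    unfold sqNorm
    rw [← Finset.sum_add_distrib]
    refine Finset.sum_congr rfl fun j _ => ?_
    by_cases hj : k ≤ (j : ℕ)
    · rw [if_pos hj, Matrix.sub_mulVec, Matrix.sub_mulVec]
      simp only [Pi.sub_apply]
      rw [hSrow _ j hj, hU0row _ _ j hj]
      ring
    · rw [if_neg hj, Matrix.sub_mulVec, Matrix.sub_mulVec]
      simp only [Pi.sub_apply]
      rw [hU0row' _ _ j hj]
      ring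
  have hhnn : ∀ x, 0 ≤ h x := by
    intro x
    refine Finset.sum_nonneg fun b _ => mul_nonneg (hp b).le ?_
    refine Finset.sum_nonneg fun j _ => ?_
    split_ifs
    · exact sq_nonneg _
    · exact le_refl 0
  -- integrability
  have hf : Integrable f μ := by
    have := integrand_integrable μ hmoment
      (fun b : Fin (min m n) => (lrProd ((b : ℕ) + 1) U V - S) * Vtᵀ) p (fun b => (hp b).le)
    refine this.congr (Filter.Eventually.of_forall fun x => ?_)
    rw [hfdef]
    simp [Matrix.mulVec_mulVec]
  have hg : Integrable g μ := by
    have := integrand_integrable μ hmoment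
      (fun b : Fin (min m n) => (lrProd ((b : ℕ) + 1) U0 V - S) * Vtᵀ) p (fun b => (hp b).le)
    refine this.congr (Filter.Eventually.of_forall fun x => ?_)
    rw [hgdef]
    simp [Matrix.mulVec_mulVec]
  have hh : Integrable h μ := by
    have : h = fun x => f x - g x := funext fun x => by rw [hfg x]; ring
    rw [this]; exact hf.sub hg
  -- the two transObj values are the integrals of f and g
  have hTf : transObj S Vt μ p U V = ∫ x, f x ∂μ := rfl
  have hTg : transObj S Vt μ p U0 V = ∫ x, g x ∂μ := rfl
  have hle1 : ∫ x, f x ∂μ ≤ ∫ x, g x ∂μ := by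
    rw [← hTf, ← hTg]; exact hmin U0 V
  have hle2 : ∫ x, g x ∂μ ≤ ∫ x, f x ∂μ :=
    integral_mono hg hf fun x => by rw [hfg x]; linarith [hhnn x]
  have hinteq : ∫ x, g x ∂μ = ∫ x, f x ∂μ := le_antisymm hle2 hle1
  have hinth : ∫ x, h x ∂μ = 0 := by
    have h1 : ∫ x, h x ∂μ = ∫ x, (f x - g x) ∂μ := by
      congr 1; funext x; rw [hfg x]; ring
    rw [h1, integral_sub hf hg, hinteq, sub_self]
  have hae : ∀ᵐ x ∂μ, h x = 0 := by
    have := (integral_eq_zero_iff_of_nonneg hhnn hh).mp hinth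
    filter_upwards [this] with x hx using hx
  refine ⟨?_, ?_, ?_⟩
  · intro b j hj
    filter_upwards [hae] with x hx
    rw [hhdef] at hx
    simp only at hx
    have h1 : ∀ b' ∈ Finset.univ, (0:ℝ) ≤ p b' * ∑ j : Fin m, (if k ≤ (j : ℕ) then
        ((lrProd ((b' : ℕ) + 1) U V).mulVec (Vtᵀ.mulVec x) j) ^ 2 else 0) := by
      intro b' _
      refine mul_nonneg (hp b').le (Finset.sum_nonneg fun j _ => ?_)
      split_ifs
      · exact sq_nonneg _
      · exact le_refl 0
    have h2 := (Finset.sum_eq_zero_iff_of_nonneg h1).mp hx b (Finset.mem_univ b)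
    have h3 : ∑ j : Fin m, (if k ≤ (j : ℕ) then
        ((lrProd ((b : ℕ) + 1) U V).mulVec (Vtᵀ.mulVec x) j) ^ 2 else 0) = 0 :=
      (mul_eq_zero.mp h2).resolve_left (hp b).ne'
    have h4 : ∀ j' ∈ Finset.univ, (0:ℝ) ≤ (if k ≤ ((j' : Fin m) : ℕ) then
        ((lrProd ((b : ℕ) + 1) U V).mulVec (Vtᵀ.mulVec x) j') ^ 2 else 0) := by
      intro j' _
      split_ifs
      · exact sq_nonneg _
      · exact le_refl 0
    have h5 := (Finset.sum_eq_zero_iff_of_nonneg h4).mp h3 j (Finset.mem_univ j)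
    rw [if_pos hj] at h5
    exact pow_eq_zero_iff two_ne_zero |>.mp h5
  · rw [hTg, hTf]; exact hinteq
  · intro U' V'
    rw [hTg, hinteq, ← hTf]
    exact hmin U' V'

end
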